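/- There is an absolute constant C > 0 with the following property. Let G be an abelian group and A ⊆ G a finite set with |A| ≥ 2. Then for every positive integer n with n ≤ C⁻¹·log|A| one has |nA| ≥ |A| · (dim(A)/(C·log|A|))^{n-1}. -/

import Mathlib

open Finset Pointwise

universe u

/-- A finset `Λ` in an abelian group is `k`-dissociated if every integer relation
`∑ ε_λ • λ = 0` with `|ε_λ| ≤ k` forces all `ε_λ = 0`. -/
def IsKDissociated {G : Type*} [AddCommGroup G] (k : ℕ) (Λ : Finset G) : Prop :=
  ∀ ε : G → ℤ, (∀ x ∈ Λ, |ε x| ≤ (k : ℤ)) → (∑ x ∈ Λ, ε x • x) = 0 → ∀ x ∈ Λ, ε x = 0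

/-- `addDim k A` is the maximal size of a `k`-dissociated subset of `A`. -/
noncomputable def addDim {G : Type*} [AddCommGroup G] (k : ℕ) (A : Finset G) : ℕ :=
  sSup {n : ℕ | ∃ Λ : Finset G, Λ ⊆ A ∧ Λ.card = n ∧ IsKDissociated k Λ}

/-- `nFold A n` is the `n`-fold sumset `A + A + ⋯ + A` (`n` summands). -/
def nFold {G : Type*} [AddCommGroup G] [DecidableEq G] (A : Finset G) : ℕ → Finset G
  | 0 => {0}
  | n + 1 => nFold A n + A

section Aux

variable {G : Type*} [AddCommGroup G] [DecidableEq G]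

lemma nFold_eq_nsmul (A : Finset G) : ∀ m : ℕ, nFold A m = m • A
  | 0 => by rw [zero_nsmul]; rfl
  | (m + 1) => by rw [succ_nsmul, ← nFold_eq_nsmul A m]; rfl

lemma nFold_nonempty {A : Finset G} (hA : A.Nonempty) : ∀ m : ℕ, (nFold A m).Nonempty
  | 0 => ⟨0, by simp [nFold]⟩
  | (m + 1) => (nFold_nonempty hA m).add hA

lemma card_le_card_nFold {A : Finset G} (hA : A.Nonempty) (m : ℕ) :
    A.card ≤ (nFold A (m + 1)).card :=
  Finset.card_le_card_add_left (nFold_nonempty hA m)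

lemma sum_mem_nFold {A : Finset G} (S : Finset G) (hS : S ⊆ A) :
    S.sum id ∈ nFold A S.card := by
  classical
  induction S using Finset.induction_on with
  | empty => simp [nFold]
  | @insert a s ha ih =>
    rw [Finset.sum_insert ha, Finset.card_insert_of_notMem ha]
    have h1 : s.sum id ∈ nFold A s.card := ih (fun x hx => hS (Finset.mem_insert_of_mem hx))
    have h2 : a ∈ A := hS (Finset.mem_insert_self a s)
    have : s.sum id + a ∈ nFold A s.card + A := Finset.add_mem_add h1 h2
    simpa [add_comm, nFold] using this

lemma sum_injOn {Λ : Finset G} (hd : IsKDissociated 1 Λ) {S T : Finset G}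
    (hS : S ⊆ Λ) (hT : T ⊆ Λ) (h : S.sum id = T.sum id) : S = T := by
  classical
  set ε : G → ℤ := fun x => (if x ∈ S then (1 : ℤ) else 0) - (if x ∈ T then (1 : ℤ) else 0)
    with hε
  have key : ∀ U : Finset G, U ⊆ Λ →
      ∑ x ∈ Λ, (if x ∈ U then (1 : ℤ) else 0) • x = U.sum id := by
    intro U hU
    rw [← Finset.sum_subset hU (fun x _ hx => by simp [hx])]
    apply Finset.sum_congr rfl
    intro x hx
    simp [hx]
  have hsum : ∑ x ∈ Λ, ε x • x = 0 := by
    have : ∑ x ∈ Λ, ε x • x =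
        (∑ x ∈ Λ, (if x ∈ S then (1 : ℤ) else 0) • x) -
          ∑ x ∈ Λ, (if x ∈ T then (1 : ℤ) else 0) • x := by
      rw [← Finset.sum_sub_distrib]
      apply Finset.sum_congr rfl
      intro x _
      rw [hε]
      simp [sub_smul]
    rw [this, key S hS, key T hT, h, sub_self]
  have hbound : ∀ x ∈ Λ, |ε x| ≤ ((1 : ℕ) : ℤ) := by
    intro y _
    by_cases h1 : y ∈ S <;> by_cases h2 : y ∈ T <;> simp [hε, h1, h2]
  have hzero := hd ε hbound hsum
  apply Finset.Subset.antisymm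
  · intro x hx
    have h0 := hzero x (hS hx)
    by_contra hxT
    rw [hε] at h0
    simp [hx, hxT] at h0
  · intro x hx
    have h0 := hzero x (hT hx)
    by_contra hxS
    rw [hε] at h0
    simp [hx, hxS] at h0

lemma choose_le_card_nFold {A Λ : Finset G} (hΛA : Λ ⊆ A) (hd : IsKDissociated 1 Λ)
    (M : ℕ) : Λ.card.choose M ≤ (nFold A M).card := by
  classical
  rw [← Finset.card_powersetCard M Λ]
  apply Finset.card_le_card_of_injOn (fun S => S.sum id)
  · intro S hS
    rw [Finset.mem_coe, Finset.mem_powersetCard] at hS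
    have := sum_mem_nFold S (hS.1.trans hΛA)
    rwa [hS.2] at this
  · intro S hS T hT hST
    exact sum_injOn hd (Finset.mem_powersetCard.1 (Finset.mem_coe.1 hS)).1
      (Finset.mem_powersetCard.1 (Finset.mem_coe.1 hT)).1 hST

end Aux

lemma pow_div_le_choose : ∀ (M d : ℕ), M ≤ d → ((d : ℝ) / M) ^ M ≤ (d.choose M : ℝ) := by
  intro M
  induction M with
  | zero => intro d _; simp
  | succ M ih =>
    intro d hd
    obtain ⟨e, rfl⟩ : ∃ e, d = e + 1 := ⟨d - 1, by omega⟩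
    have hMe : M ≤ e := by omega
    have hbase : (0 : ℝ) ≤ ((e : ℝ) + 1) / ((M : ℝ) + 1) := by positivity
    have h1 : (((e : ℝ) + 1) / ((M : ℝ) + 1)) ^ M ≤ ((e : ℝ) / M) ^ M := by
      rcases Nat.eq_zero_or_pos M with h | h
      · simp [h]
      · apply pow_le_pow_left₀ hbase
        have hM0 : (0 : ℝ) < (M : ℝ) := by exact_mod_cast h
        rw [div_le_div_iff₀ (by positivity) hM0]
        have : (M : ℝ) ≤ (e : ℝ) := by exact_mod_cast hMe
        nlinarith
    have key : ((e : ℝ) + 1) * (e.choose M : ℝ) = ((M : ℝ) + 1) * ((e + 1).choose (M + 1) : ℝ) := by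
      have := Nat.add_one_mul_choose_eq e M
      have h2 : (e + 1) * e.choose M = (e + 1).choose (M + 1) * (M + 1) := by
        simpa [Nat.succ_eq_add_one] using this
      exact_mod_cast by rw [h2]; ring
    have hchoose0 : (0 : ℝ) ≤ (e.choose M : ℝ) := by positivity
    calc (((e + 1 : ℕ) : ℝ) / ((M + 1 : ℕ) : ℝ)) ^ (M + 1)
        = (((e : ℝ) + 1) / ((M : ℝ) + 1)) * ((((e : ℝ) + 1) / ((M : ℝ) + 1)) ^ M) := by
          push_cast; ring
      _ ≤ (((e : ℝ) + 1) / ((M : ℝ) + 1)) * (e.choose M : ℝ) := by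
          apply mul_le_mul_of_nonneg_left (h1.trans (ih e hMe)) hbase
      _ = ((e + 1).choose (M + 1) : ℝ) := by
          rw [div_mul_eq_mul_div, key]
          field_simp

theorem stmt0 :
    ∃ C : ℝ, 0 < C ∧
      ∀ (G : Type u) [AddCommGroup G] [DecidableEq G] (A : Finset G),
        2 ≤ A.card →
        ∀ n : ℕ, 1 ≤ n → (n : ℝ) ≤ C⁻¹ * Real.logb 2 A.card →
          ((nFold A n).card : ℝ) ≥
            (A.card : ℝ) * ((addDim 1 A : ℝ) / (C * Real.logb 2 A.card)) ^ (n - 1) := by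
  refine ⟨24, by norm_num, ?_⟩
  intro G _ _ A hA n hn hnle
  classical
  set L : ℝ := Real.logb 2 A.card with hLdef
  have hA2 : (2 : ℝ) ≤ (A.card : ℝ) := by exact_mod_cast hA
  have hA0 : (0 : ℝ) < (A.card : ℝ) := by linarith
  have hAne : A.Nonempty := Finset.card_pos.1 (by omega)
  have hL1 : 1 ≤ L := by
    rw [hLdef, Real.le_logb_iff_rpow_le (by norm_num) hA0]
    rw [Real.rpow_one]; exact hA2
  have hL0 : (0 : ℝ) < L := by linarith
  have h2L : (2 : ℝ) ^ L = (A.card : ℝ) := Real.rpow_logb (by norm_num) (by norm_num) hA0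
  have hcard_nA : (A.card : ℝ) ≤ ((nFold A n).card : ℝ) := by
    obtain ⟨m, rfl⟩ : ∃ m, n = m + 1 := ⟨n - 1, by omega⟩
    exact_mod_cast card_le_card_nFold hAne m
  set d : ℕ := addDim 1 A with hddef
  set x : ℝ := (d : ℝ) / (24 * L) with hxdef
  have hx0 : 0 ≤ x := by positivity
  -- trivial case first
  by_cases hcase : (d : ℝ) ≤ 24 * L
  · have hx1 : x ≤ 1 := by
      rw [hxdef, div_le_one (by positivity)]; exact hcase
    have hpow : x ^ (n - 1) ≤ 1 := pow_le_one₀ hx0 hx1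
    calc (A.card : ℝ) * x ^ (n - 1) ≤ (A.card : ℝ) * 1 := by
          exact mul_le_mul_of_nonneg_left hpow (le_of_lt hA0)
      _ = (A.card : ℝ) := mul_one _
      _ ≤ ((nFold A n).card : ℝ) := hcard_nA
  · push_neg at hcase
    by_cases hn1 : n = 1
    · subst hn1
      simpa using hcard_nA
    have hn2 : 2 ≤ n := by omega
    set n' : ℕ := n - 1 with hn'def
    have hn'1 : 1 ≤ n' := by omega
    have hn'pos : (0 : ℝ) < (n' : ℝ) := by exact_mod_cast hn'1
    have hnn' : n = n' + 1 := by omega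
    have hnL : (n : ℝ) ≤ L / 24 := by
      rw [div_eq_inv_mul]; exact hnle
    have hn'L : (n' : ℝ) ≤ L / 24 := by
      have : (n' : ℝ) ≤ (n : ℝ) := by exact_mod_cast Nat.sub_le n 1
      linarith
    set k : ℕ := ⌈L / (n' : ℝ)⌉₊ with hkdef
    have hk1 : 1 ≤ k := by
      rw [hkdef]
      exact Nat.one_le_ceil_iff.2 (by positivity)
    set M : ℕ := k * n' with hMdef
    have hM1 : 1 ≤ M := by
      rw [hMdef]; exact Nat.one_le_iff_ne_zero.2 (by positivity)
    have hML : L ≤ (M : ℝ) := by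
      have h1 : L / (n' : ℝ) ≤ (k : ℝ) := Nat.le_ceil _
      calc L = L / (n' : ℝ) * (n' : ℝ) := by field_simp
        _ ≤ (k : ℝ) * (n' : ℝ) := mul_le_mul_of_nonneg_right h1 (le_of_lt hn'pos)
        _ = (M : ℝ) := by rw [hMdef]; push_cast; ring
    have hM2L : (M : ℝ) ≤ 2 * L := by
      have h1 : (k : ℝ) < L / (n' : ℝ) + 1 := Nat.ceil_lt_add_one (by positivity)
      have h2 : (M : ℝ) = (k : ℝ) * (n' : ℝ) := by rw [hMdef]; push_cast; ring
      have h3 : (M : ℝ) < (L / (n' : ℝ) + 1) * (n' : ℝ) := by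
        rw [h2]; exact mul_lt_mul_of_pos_right h1 hn'pos
      have h4 : (L / (n' : ℝ) + 1) * (n' : ℝ) = L + (n' : ℝ) := by field_simp
      linarith
    have hMd : M ≤ d := by
      have : (M : ℝ) < (d : ℝ) := by linarith
      exact_mod_cast this.le
    -- extract a dissociated set of size d
    obtain ⟨Λ, hΛA, hΛcard, hΛdis⟩ :
        ∃ Λ : Finset G, Λ ⊆ A ∧ Λ.card = d ∧ IsKDissociated 1 Λ := by
      have hne : {m : ℕ | ∃ Λ : Finset G, Λ ⊆ A ∧ Λ.card = m ∧ IsKDissociated 1 Λ}.Nonempty :=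
        ⟨0, ∅, Finset.empty_subset A, Finset.card_empty,
          fun ε _ _ y hy => absurd hy (Finset.notMem_empty y)⟩
      have hbdd : BddAbove {m : ℕ | ∃ Λ : Finset G, Λ ⊆ A ∧ Λ.card = m ∧ IsKDissociated 1 Λ} :=
        ⟨A.card, fun m ⟨Λ, hΛ, hc, _⟩ => hc ▸ Finset.card_le_card hΛ⟩
      exact Nat.sSup_mem hne hbdd
    -- binomial lower bound for the M-fold sumset
    have hbin : ((d : ℝ) / M) ^ M ≤ ((nFold A M).card : ℝ) := by
      refine (pow_div_le_choose M d hMd).trans ?_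
      have := choose_le_card_nFold hΛA hΛdis M
      rw [hΛcard] at this
      exact_mod_cast this
    -- Plünnecke–Ruzsa
    set t : ℝ := ((nFold A n).card : ℝ) / (A.card : ℝ) with htdef
    have ht0 : 0 ≤ t := by rw [htdef]; exact div_nonneg (Nat.cast_nonneg _) (Nat.cast_nonneg _)
    have hplu : ((nFold A M).card : ℝ) ≤ t ^ k * (A.card : ℝ) := by
      have h := Finset.pluennecke_ruzsa_inequality_nsmul_add hAne (nFold A n') k
      have e1 : k • nFold A n' = nFold A M := by
        rw [nFold_eq_nsmul, nFold_eq_nsmul, hMdef, mul_comm k n', mul_nsmul]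
      have e2 : A + nFold A n' = nFold A n := by
        rw [hnn']
        show A + nFold A n' = nFold A n' + A
        exact add_comm _ _
      rw [e1, e2] at h
      have h' : (((nFold A M).card : ℚ≥0) : ℝ) ≤
          (((((nFold A n).card : ℚ≥0) / ((A.card : ℕ) : ℚ≥0)) ^ k * ((A.card : ℕ) : ℚ≥0) : ℚ≥0) : ℝ) := by
        exact_mod_cast h
      push_cast at h'
      rw [htdef]
      exact h'
    -- combine
    have hdM : 2 * x ≤ (d : ℝ) / M := by
      have h1 : 2 * x = (d : ℝ) / (12 * L) := by rw [hxdef]; ring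
      rw [h1]
      apply div_le_div_of_nonneg_left (by positivity) (by exact_mod_cast hM1) (by linarith)
    have hAxM : (A.card : ℝ) * x ^ M ≤ ((d : ℝ) / M) ^ M := by
      have h2M : (A.card : ℝ) ≤ (2 : ℝ) ^ M := by
        rw [← h2L, ← Real.rpow_natCast 2 M]
        exact Real.rpow_le_rpow_of_exponent_le (by norm_num) hML
      calc (A.card : ℝ) * x ^ M ≤ (2 : ℝ) ^ M * x ^ M := by
            exact mul_le_mul_of_nonneg_right h2M (by positivity)
        _ = (2 * x) ^ M := by rw [mul_pow]
        _ ≤ ((d : ℝ) / M) ^ M := pow_le_pow_left₀ (by positivity) hdM M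
    have hkey : (x ^ n') ^ k ≤ t ^ k := by
      have h1 : (A.card : ℝ) * x ^ M ≤ t ^ k * (A.card : ℝ) :=
        le_trans hAxM (le_trans hbin hplu)
      have h2 : x ^ M = (x ^ n') ^ k := by
        rw [hMdef, mul_comm k n', pow_mul]
      nlinarith [pow_nonneg ht0 k]
    have hfin : x ^ n' ≤ t := le_of_pow_le_pow_left₀ (by omega) ht0 hkey
    calc (A.card : ℝ) * x ^ n' = x ^ n' * (A.card : ℝ) := mul_comm _ _
      _ ≤ t * (A.card : ℝ) := mul_le_mul_of_nonneg_right hfin hA0.le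
      _ = ((nFold A n).card : ℝ) := by
          rw [htdef, div_mul_cancel₀ _ (ne_of_gt hA0)]
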